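/- Consider the coupled public-goods–donation payoff y_i(p) with defector set D ⊂ {1,…,N}, and let s_i^{∖D} = ε Σ_j (A_{ji}/d_j) Σ_{k∉D} (A_{kj}/d_k) + (1 − ε) Σ_{k∉D, k≠i} (A_{ki}/(d_k−1)). If α s_i^{∖D} > 1 for every i ∉ D, then y_i(1_{∖D}) > 0 for every i ∉ D, and consequently 1_{∖D} is an asymptotically stable equilibrium, relative to K = { p ∈ [0,1]^N : p_i = 0 for all i ∈ D }, of the dynamics ṗ_i = p_i (1 − p_i) y_i(p) for i ∉ D. -/

import Mathlib

open Filter Topology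

lemma grow_aux (f f' : ℝ → ℝ) (m a b : ℝ) (ha : 0 ≤ a) (hab : a ≤ b)
    (hder : ∀ t ∈ Set.Icc a b, HasDerivWithinAt f (f' t) (Set.Ici 0) t)
    (hm : ∀ t ∈ Set.Ioo a b, m ≤ f' t) : f a + m * (b - a) ≤ f b := by
  rcases eq_or_lt_of_le hab with rfl | hlt
  · simp
  have hIcc : Set.Icc a b ⊆ Set.Ici (0:ℝ) := fun t ht => le_trans ha ht.1
  have hda : ∀ t ∈ Set.Ioo a b,
      HasDerivAt (fun u => f u - m * u) (f' t - m) t := by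
    intro t ht
    have h0 : (0:ℝ) < t := lt_of_le_of_lt ha ht.1
    have h1 : HasDerivAt f (f' t) t :=
      (hder t ⟨ht.1.le, ht.2.le⟩).hasDerivAt (Ici_mem_nhds h0)
    have h2 := h1.sub ((hasDerivAt_id t).const_mul m)
    rw [mul_one] at h2
    exact h2
  have hmono : MonotoneOn (fun u => f u - m * u) (Set.Icc a b) := by
    apply monotoneOn_of_deriv_nonneg (convex_Icc a b)
    · have hcf : ContinuousOn f (Set.Icc a b) := fun t ht =>
        ((hder t ht).continuousWithinAt).mono hIcc
      exact hcf.sub (continuous_const.mul continuous_id).continuousOn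
    · intro t ht
      rw [interior_Icc] at ht
      exact (hda t ht).differentiableAt.differentiableWithinAt
    · intro t ht
      rw [interior_Icc] at ht
      rw [(hda t ht).deriv]
      linarith [hm t ht]
  have := hmono ⟨le_refl a, hab⟩ ⟨hab, le_refl b⟩ hab
  simp only at this
  linarith

/-- For the coupled public-goods–donation payoff `y i p = b i p - p i` with defector set `D`
and neighborhood importance index `s i`, if `α * s i > 1` for every `i ∉ D`, then
`y i (1_{∖D}) > 0` for every `i ∉ D`, and the point `1_{∖D}` is an asymptotically stable
equilibrium relative to `K = {p ∈ [0,1]^N : p i = 0 for i ∈ D}` of the dynamics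
`ṗ i = p i (1 - p i) y i p` for `i ∉ D`. -/
theorem public_goods_donation_full_cooperation_stable
    (N : ℕ)
    (A : Fin N → Fin N → ℝ) (hA01 : ∀ i j, A i j = 0 ∨ A i j = 1)
    (hAsymm : ∀ i j, A i j = A j i) (hAdiag : ∀ i, A i i = 1)
    (d : Fin N → ℝ) (hd : ∀ i, d i = ∑ j : Fin N, A i j) (hd2 : ∀ i, 2 ≤ d i)
    (α ε : ℝ) (hα : 0 < α) (hε : 0 < ε) (hε1 : ε ≤ 1)
    (D : Finset (Fin N))
    (onesD : Fin N → ℝ) (honesD : onesD = fun k => if k ∈ D then 0 else 1)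
    (s : Fin N → ℝ)
    (hs : ∀ i, s i = ε * ∑ j : Fin N, (A j i / d j) * ∑ k ∈ Dᶜ, A k j / d k
        + (1 - ε) * ∑ k ∈ Dᶜ.erase i, A k i / (d k - 1))
    (b : Fin N → (Fin N → ℝ) → ℝ)
    (hb : ∀ i, b i = fun p =>
      ε * α * ∑ j : Fin N, (A j i / d j) * ∑ k : Fin N, (A k j / d k) * p k
        + (1 - ε) * α * ∑ k ∈ Finset.univ.erase i, (A k i / (d k - 1)) * p k)
    (y : Fin N → (Fin N → ℝ) → ℝ) (hy : ∀ i p, y i p = b i p - p i)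
    (K : Set (Fin N → ℝ))
    (hK : K = {q : Fin N → ℝ | q ∈ Set.Icc (0 : Fin N → ℝ) 1 ∧ ∀ i ∈ D, q i = 0})
    (hαs : ∀ i ∉ D, 1 < α * s i) :
    (∀ i ∉ D, 0 < y i onesD) ∧
    (∀ U ∈ 𝓝[K] onesD, ∃ V ∈ 𝓝[K] onesD,
      ∀ p : ℝ → Fin N → ℝ,
        (∀ t ∈ Set.Ici (0 : ℝ), p t ∈ K) →
        (∀ i ∉ D, ∀ t ∈ Set.Ici (0 : ℝ),
          HasDerivWithinAt (fun u => p u i)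
            (p t i * (1 - p t i) * y i (p t)) (Set.Ici 0) t) →
        p 0 ∈ V →
        (∀ t ∈ Set.Ici (0 : ℝ), p t ∈ U) ∧ Tendsto p atTop (𝓝 onesD)) := by
  have hA0 : ∀ i j, 0 ≤ A i j := by
    intro i j; rcases hA01 i j with h | h <;> simp [h]
  have hdpos : ∀ i, 0 < d i := fun i => lt_of_lt_of_le two_pos (hd2 i)
  have hd1 : ∀ i, 0 < d i - 1 := fun i => by linarith [hd2 i]
  set c : Fin N → Fin N → ℝ := fun i k =>
    ε * α * (∑ j : Fin N, (A j i / d j) * (A k j / d k))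
      + (1 - ε) * α * (if k = i then 0 else A k i / (d k - 1)) with hc
  have hcnn : ∀ i k, 0 ≤ c i k := by
    intro i k
    apply add_nonneg
    · apply mul_nonneg (by positivity)
      apply Finset.sum_nonneg
      intro j _
      exact mul_nonneg (div_nonneg (hA0 j i) (hdpos j).le)
        (div_nonneg (hA0 k j) (hdpos k).le)
    · apply mul_nonneg (by nlinarith)
      split
      · exact le_refl 0
      · exact div_nonneg (hA0 k i) (hd1 k).le
  have hbc : ∀ i q, b i q = ∑ k : Fin N, c i k * q k := by
    intro i q
    rw [hb]
    simp only [hc, add_mul, Finset.sum_add_distrib, Finset.mul_sum, Finset.sum_mul]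
    congr 1
    · rw [Finset.sum_comm]
      exact Finset.sum_congr rfl fun j _ => Finset.sum_congr rfl fun k _ => by ring
    · rw [← Finset.sum_erase Finset.univ (a := i)
        (f := fun k => ((1 - ε) * α * if k = i then 0 else A k i / (d k - 1)) * q k)
        (by simp)]
      exact Finset.sum_congr rfl fun k hk => by
        rw [if_neg (Finset.ne_of_mem_erase hk)]; ring
  have hones : ∀ i, (∑ k : Fin N, c i k * onesD k) = α * s i := by
    intro i
    have h1 : (∑ k : Fin N, c i k * onesD k) = ∑ k ∈ Dᶜ, c i k := by
      rw [← Finset.sum_subset (Finset.subset_univ Dᶜ)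
        (f := fun k => c i k * onesD k) ?_]
      · apply Finset.sum_congr rfl
        intro k hk
        rw [honesD]; simp [Finset.mem_compl.1 hk]
      · intro k _ hk
        rw [honesD]; simp [Finset.notMem_compl.1 hk]
    rw [h1, hs]
    simp only [hc, Finset.sum_add_distrib, mul_add, Finset.mul_sum]
    congr 1
    · rw [Finset.sum_comm]
      exact Finset.sum_congr rfl fun j _ => Finset.sum_congr rfl fun k _ => by ring
    · rw [← Finset.sum_erase Dᶜ (a := i)
        (f := fun k => (1 - ε) * α * (if k = i then 0 else A k i / (d k - 1)))
        (by simp)]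
      exact Finset.sum_congr rfl fun k hk => by
        rw [if_neg (Finset.ne_of_mem_erase hk)]; ring
  have hbones : ∀ i, b i onesD = α * s i := fun i => by rw [hbc]; exact hones i
  have hy1 : ∀ i ∉ D, 0 < y i onesD := by
    intro i hi
    rw [hy, hbones]
    have : onesD i = 1 := by rw [honesD]; simp [hi]
    rw [this]
    linarith [hαs i hi]
  refine ⟨hy1, ?_⟩
  -- choose η, δ
  obtain ⟨η, δ, hη0, hη1, hδ0, hηδ⟩ : ∃ η δ : ℝ, 0 < η ∧ η < 1 ∧ 0 < δ ∧
      ∀ i ∉ D, δ ≤ (1 - η) * (α * s i) - 1 := by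
    by_cases hne : (Dᶜ : Finset (Fin N)).Nonempty
    · set M := Dᶜ.inf' hne (fun i => α * s i) with hM
      have hM1 : 1 < M := by
        rw [hM, Finset.lt_inf'_iff]
        intro i hi
        exact hαs i (Finset.mem_compl.1 hi)
      have hM0 : (0:ℝ) < M := lt_trans one_pos hM1
      refine ⟨(M-1)/(2*M), (M-1)/2, div_pos (by linarith) (by linarith), ?_, by linarith, ?_⟩
      · rw [div_lt_one (by positivity)]; linarith
      · intro i hi
        have hMle : M ≤ α * s i := Finset.inf'_le _ (Finset.mem_compl.2 hi)
        have hpos : 0 < 1 - (M-1)/(2*M) := by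
          rw [sub_pos, div_lt_one (by positivity)]; linarith
        have key : (1 - (M-1)/(2*M)) * M - 1 = (M-1)/2 := by
          field_simp; ring
        nlinarith [mul_le_mul_of_nonneg_left hMle hpos.le]
    · refine ⟨1/2, 1/2, by norm_num, by norm_num, by norm_num, ?_⟩
      intro i hi
      exact absurd (Finset.mem_compl.2 hi)
        (by simp [Finset.not_nonempty_iff_eq_empty.1 hne])
  have hKmem : ∀ q ∈ K, (∀ k, 0 ≤ q k ∧ q k ≤ 1) ∧ (∀ k ∈ D, q k = 0) := by
    intro q hq; rw [hK] at hq; exact ⟨fun k => ⟨hq.1.1 k, hq.1.2 k⟩, hq.2⟩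
  have hY : ∀ q ∈ K, (∀ k ∉ D, 1 - η ≤ q k) → ∀ i ∉ D, δ ≤ y i q := by
    intro q hqK hq i hi
    obtain ⟨hq01, hqD⟩ := hKmem q hqK
    have hb_ge : (1 - η) * (α * s i) ≤ b i q := by
      rw [hbc]
      calc (1-η) * (α * s i) = ∑ k : Fin N, c i k * ((1-η) * onesD k) := by
            rw [← hones i, Finset.mul_sum]
            exact Finset.sum_congr rfl fun k _ => by ring
        _ ≤ ∑ k : Fin N, c i k * q k := by
            apply Finset.sum_le_sum; intro k _
            apply mul_le_mul_of_nonneg_left _ (hcnn i k)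
            by_cases hk : k ∈ D
            · simpa [honesD, hk] using (hq01 k).1
            · simpa [honesD, hk] using hq k hk
    rw [hy]
    have h1 := hηδ i hi
    have hqi := (hq01 i).2
    linarith
  -- main stability argument
  intro U hU
  obtain ⟨r, hr0, hrU⟩ := Metric.mem_nhdsWithin_iff.1 hU
  set ρ := min η (r/2) with hρ
  have hρ0 : 0 < ρ := lt_min hη0 (by linarith)
  have hρη : ρ ≤ η := min_le_left _ _
  have hρr : ρ ≤ r/2 := min_le_right _ _
  have hρ1 : ρ < 1 := lt_of_le_of_lt hρη hη1
  refine ⟨{q | ∀ k ∉ D, 1 - ρ/2 < q k} ∩ K, ?_, ?_⟩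
  · apply mem_nhdsWithin.2
    refine ⟨{q | ∀ k ∉ D, 1 - ρ/2 < q k}, ?_, ?_, fun q hq => hq⟩
    · have hopen : IsOpen (⋂ k ∈ (Dᶜ : Finset (Fin N)),
          {q : Fin N → ℝ | 1 - ρ/2 < q k}) :=
        isOpen_biInter_finset fun k _ =>
          isOpen_lt continuous_const (continuous_apply k)
      convert hopen using 1
      ext q
      simp [Finset.mem_compl]
    · intro k hk
      have h1 : onesD k = 1 := by rw [honesD]; simp [hk]
      show (1:ℝ) - ρ/2 < onesD k
      rw [h1]; linarith
  · intro p hpK hpder hp0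
    obtain ⟨hp0V, hp0K⟩ := hp0
    have hpcoord : ∀ t ∈ Set.Ici (0:ℝ), ∀ k, 0 ≤ p t k ∧ p t k ≤ 1 :=
      fun t ht => (hKmem _ (hpK t ht)).1
    have hpD : ∀ t ∈ Set.Ici (0:ℝ), ∀ k ∈ D, p t k = 0 :=
      fun t ht => (hKmem _ (hpK t ht)).2
    -- invariance
    have hinv : ∀ t ∈ Set.Ici (0:ℝ), ∀ k ∉ D, 1 - ρ < p t k := by
      by_contra hcon
      push_neg at hcon
      obtain ⟨t₁, ht₁, k₁, hk₁, hle₁⟩ := hcon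
      set B : Set ℝ := {t : ℝ | 0 ≤ t ∧ ∃ k, k ∉ D ∧ p t k ≤ 1 - ρ} with hB
      have hBclosed : IsClosed B := by
        have hBeq : B = ⋃ k ∈ (Dᶜ : Finset (Fin N)),
            (Set.Ici (0:ℝ) ∩ (fun t => p t k) ⁻¹' Set.Iic (1 - ρ)) := by
          ext t
          simp only [hB, Set.mem_setOf_eq, Set.mem_iUnion, Set.mem_inter_iff,
            Set.mem_Ici, Set.mem_preimage, Set.mem_Iic, Finset.mem_coe,
            Finset.mem_compl, exists_prop]
          tauto
        rw [hBeq]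
        apply Set.Finite.isClosed_biUnion (Dᶜ : Finset (Fin N)).finite_toSet
        intro k hk
        have hk' : k ∉ D := Finset.mem_compl.1 (Finset.mem_coe.1 hk)
        have hcont : ContinuousOn (fun t => p t k) (Set.Ici (0:ℝ)) :=
          fun t ht => (hpder k hk' t ht).continuousWithinAt
        exact hcont.preimage_isClosed_of_isClosed isClosed_Ici isClosed_Iic
      have hBne : B.Nonempty := ⟨t₁, ht₁, k₁, hk₁, hle₁⟩
      have hBbdd : BddBelow B := ⟨0, fun t ht => ht.1⟩
      set t₀ := sInf B with ht₀
      obtain ⟨ht₀0, k₀, hk₀, hk₀le⟩ := hBclosed.csInf_mem hBne hBbdd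
      have hbefore : ∀ t, 0 ≤ t → t < t₀ → ∀ k ∉ D, 1 - ρ < p t k := by
        intro t ht htlt k hk
        by_contra hle
        push_neg at hle
        exact absurd (csInf_le hBbdd ⟨ht, k, hk, hle⟩) (not_le.2 htlt)
      have hgrow := grow_aux (fun u => p u k₀)
        (fun t => p t k₀ * (1 - p t k₀) * y k₀ (p t)) 0 0 t₀ le_rfl ht₀0
        (fun t ht => hpder k₀ hk₀ t ht.1) ?_
      · have h0k₀ : 1 - ρ/2 < p 0 k₀ := hp0V k₀ hk₀
        simp only [zero_mul, add_zero] at hgrow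
        linarith
      · intro t ht
        show (0:ℝ) ≤ p t k₀ * (1 - p t k₀) * y k₀ (p t)
        have htI : t ∈ Set.Ici (0:ℝ) := le_of_lt ht.1
        have h01 := hpcoord t htI k₀
        have hyge : δ ≤ y k₀ (p t) :=
          hY (p t) (hpK t htI)
            (fun k hk => by linarith [hbefore t htI ht.2 k hk]) k₀ hk₀
        have : 0 ≤ p t k₀ * (1 - p t k₀) :=
          mul_nonneg h01.1 (by linarith [h01.2])
        nlinarith
    -- y bounded below by δ along the trajectory
    have hyδ : ∀ t ∈ Set.Ici (0:ℝ), ∀ i ∉ D, δ ≤ y i (p t) := by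
      intro t ht i hi
      exact hY (p t) (hpK t ht) (fun k hk => by linarith [hinv t ht k hk]) i hi
    -- monotonicity of coordinates
    have hmonoAll : ∀ k ∉ D, ∀ a b', 0 ≤ a → a ≤ b' → p a k ≤ p b' k := by
      intro k hk a b' ha hab
      have hgrow := grow_aux (fun u => p u k)
        (fun t => p t k * (1 - p t k) * y k (p t)) 0 a b' ha hab
        (fun t ht => hpder k hk t (le_trans ha ht.1)) ?_
      · simpa using hgrow
      · intro t ht
        show (0:ℝ) ≤ p t k * (1 - p t k) * y k (p t)
        have htI : t ∈ Set.Ici (0:ℝ) := le_of_lt (lt_of_le_of_lt ha ht.1)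
        have h01 := hpcoord t htI k
        have hyge := hyδ t htI k hk
        have : 0 ≤ p t k * (1 - p t k) :=
          mul_nonneg h01.1 (by linarith [h01.2])
        nlinarith
    constructor
    · -- stays in U
      intro t ht
      apply hrU
      refine ⟨?_, hpK t ht⟩
      rw [Metric.mem_ball, dist_pi_lt_iff hr0]
      intro k
      by_cases hk : k ∈ D
      · rw [hpD t ht k hk, honesD]
        simp [hk, hr0]
      · have h1 := hinv t ht k hk
        have h2 := (hpcoord t ht k).2
        have honek : onesD k = 1 := by rw [honesD]; simp [hk]
        rw [honek, Real.dist_eq, abs_of_nonpos (by linarith)]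
        linarith
    · -- convergence
      rw [tendsto_pi_nhds]
      intro k
      by_cases hk : k ∈ D
      · have honek : onesD k = 0 := by rw [honesD]; simp [hk]
        rw [honek]
        exact Tendsto.congr'
          (eventually_atTop.2 ⟨0, fun t ht => (hpD t ht k hk).symm⟩)
          tendsto_const_nhds
      · have honek : onesD k = 1 := by rw [honesD]; simp [hk]
        rw [honek, Metric.tendsto_atTop]
        intro e he
        have hexT : ∃ T, 0 ≤ T ∧ 1 - e < p T k := by
          by_contra hcon
          push_neg at hcon
          have hm0 : 0 < (1-ρ)*e*δ := by
            apply mul_pos (mul_pos (by linarith) he) hδ0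
          set T := 2 / ((1-ρ)*e*δ) with hT
          have hT0 : 0 < T := by positivity
          have hgrow := grow_aux (fun u => p u k)
            (fun t => p t k * (1 - p t k) * y k (p t)) ((1-ρ)*e*δ) 0 T
            le_rfl hT0.le (fun t ht => hpder k hk t ht.1) ?_
          · have hT2 : ((1-ρ)*e*δ) * (T - 0) = 2 := by
              rw [hT, sub_zero]; field_simp [he.ne', hδ0.ne', (sub_pos.2 hρ1).ne']
            have hp0nn := (hpcoord 0 Set.self_mem_Ici k).1
            have hpT := (hpcoord T hT0.le k).2
            linarith
          · intro t ht
            show (1-ρ)*e*δ ≤ p t k * (1 - p t k) * y k (p t)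
            have htI : t ∈ Set.Ici (0:ℝ) := le_of_lt ht.1
            have h1 : 1 - ρ ≤ p t k := (hinv t htI k hk).le
            have h2 : e ≤ 1 - p t k := by linarith [hcon t htI]
            have hyge := hyδ t htI k hk
            have hstep : (1-ρ)*e ≤ p t k * (1 - p t k) :=
              mul_le_mul h1 h2 he.le (le_trans (by linarith) h1)
            calc (1-ρ)*e*δ ≤ (p t k * (1 - p t k)) * δ :=
                  mul_le_mul_of_nonneg_right hstep hδ0.le
              _ ≤ p t k * (1 - p t k) * y k (p t) := by
                  apply mul_le_mul_of_nonneg_left hyge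
                  exact mul_nonneg (by linarith) (by linarith [(hpcoord t htI k).2])
        obtain ⟨T, hT0, hTk⟩ := hexT
        refine ⟨T, fun t ht => ?_⟩
        have htI : (0:ℝ) ≤ t := le_trans hT0 ht
        have hmono := hmonoAll k hk T t hT0 ht
        rw [Real.dist_eq, abs_of_nonpos (by linarith [(hpcoord t htI k).2])]
        linarith
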